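/- Let O₁, O₂ be ALC ontologies and C₁, C₂ ALC concepts with Σ = sig(O₁,C₁) ∩ sig(O₂,C₂). Suppose no ALC-interpolant for C₁ ⊑ C₂ under O₁ ∪ O₂ exists. Then there is a model J of O₁ ∪ O₂ and an element d ∈ Δ^J such that d ∉ C₂^J and d ∈ D^J for every ALC(Σ)-concept D with O₁ ∪ O₂ ⊨ C₁ ⊑ D. (Compactness step of Theorem on interpolant existence.) -/

import Mathlib

/-- An ALC interpretation over concept names `C` and role names `R` with domain `Δ`. -/
structure Interp (C R Δ : Type) where
  conc : C → Set Δ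
  role : R → Set (Δ × Δ)

/-- ALC concepts. -/
inductive ALCConcept (C R : Type) : Type
  | top : ALCConcept C R
  | atom : C → ALCConcept C R
  | neg : ALCConcept C R → ALCConcept C R
  | inter : ALCConcept C R → ALCConcept C R → ALCConcept C R
  | ex : R → ALCConcept C R → ALCConcept C R

/-- Semantics of ALC concepts. -/
def Interp.sem {C R Δ : Type} (I : Interp C R Δ) : ALCConcept C R → Set Δ
  | .top => Set.univ
  | .atom A => I.conc A
  | .neg c => (I.sem c)ᶜ
  | .inter c d => I.sem c ∩ I.sem d
  | .ex r c => {d | ∃ e, (d, e) ∈ I.role r ∧ e ∈ I.sem c}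

/-- A concept uses only symbols from the signature `(σC, σR)`. -/
def ALCConcept.inSig {C R : Type} (σC : Set C) (σR : Set R) : ALCConcept C R → Prop
  | .top => True
  | .atom A => A ∈ σC
  | .neg c => c.inSig σC σR
  | .inter c d => c.inSig σC σR ∧ d.inSig σC σR
  | .ex r c => r ∈ σR ∧ c.inSig σC σR

/-- ALCConcept names occurring in a concept. -/
def ALCConcept.cnames {C R : Type} : ALCConcept C R → Set C
  | .top => ∅
  | .atom A => {A}
  | .neg c => c.cnames
  | .inter c d => c.cnames ∪ d.cnames
  | .ex _ c => c.cnames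

/-- Role names occurring in a concept. -/
def ALCConcept.rnames {C R : Type} : ALCConcept C R → Set R
  | .top => ∅
  | .atom _ => ∅
  | .neg c => c.rnames
  | .inter c d => c.rnames ∪ d.rnames
  | .ex r c => {r} ∪ c.rnames

/-- Rename the symbols of a concept. -/
def ALCConcept.rename {C R : Type} (fC : C → C) (fR : R → R) : ALCConcept C R → ALCConcept C R
  | .top => .top
  | .atom A => .atom (fC A)
  | .neg c => .neg (c.rename fC fR)
  | .inter c d => .inter (c.rename fC fR) (d.rename fC fR)
  | .ex r c => .ex (fR r) (c.rename fC fR)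

/-- An interpretation is a model of an ontology (a set of concept inclusions). -/
def Interp.models {C R Δ : Type} (I : Interp C R Δ)
    (O : Set (ALCConcept C R × ALCConcept C R)) : Prop :=
  ∀ p ∈ O, I.sem p.1 ⊆ I.sem p.2

/-- ALCConcept names occurring in an ontology. -/
def ontCnames {C R : Type} (O : Set (ALCConcept C R × ALCConcept C R)) : Set C :=
  ⋃ p ∈ O, p.1.cnames ∪ p.2.cnames

/-- Role names occurring in an ontology. -/
def ontRnames {C R : Type} (O : Set (ALCConcept C R × ALCConcept C R)) : Set R :=
  ⋃ p ∈ O, p.1.rnames ∪ p.2.rnames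

/-- `S` is an ALC(Σ)-bisimulation between `I` and `J`. -/
structure IsBisim {C R Δ₁ Δ₂ : Type} (σC : Set C) (σR : Set R)
    (I : Interp C R Δ₁) (J : Interp C R Δ₂) (S : Set (Δ₁ × Δ₂)) : Prop where
  atomC : ∀ d e, (d, e) ∈ S → ∀ A ∈ σC, (d ∈ I.conc A ↔ e ∈ J.conc A)
  forth : ∀ d e, (d, e) ∈ S → ∀ r ∈ σR, ∀ d', (d, d') ∈ I.role r →
      ∃ e', (e, e') ∈ J.role r ∧ (d', e') ∈ S
  back : ∀ d e, (d, e) ∈ S → ∀ r ∈ σR, ∀ e', (e, e') ∈ J.role r →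
      ∃ d', (d, d') ∈ I.role r ∧ (d', e') ∈ S

/-- Implicit definability of a concept from a signature under an ontology:
any two models of `O` with the same domain agreeing on all symbols in the
signature give the concept the same extension. -/
def ImplicitlyDefinable {C R : Type} (O : Set (ALCConcept C R × ALCConcept C R))
    (c : ALCConcept C R) (σC : Set C) (σR : Set R) : Prop :=
  ∀ (Δ : Type) (I J : Interp C R Δ), I.models O → J.models O →
    (∀ A ∈ σC, I.conc A = J.conc A) → (∀ r ∈ σR, I.role r = J.role r) →
    I.sem c = J.sem c

open Filter

section Aux

variable {C R : Type}

/-- Conjunction of a list of concepts. -/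
def conjList : List (ALCConcept C R) → ALCConcept C R
  | [] => .top
  | D :: L => .inter D (conjList L)

theorem mem_sem_conjList {Δ : Type} (I : Interp C R Δ) :
    ∀ (L : List (ALCConcept C R)) (x : Δ),
      x ∈ I.sem (conjList L) ↔ ∀ D ∈ L, x ∈ I.sem D := by
  intro L
  induction L with
  | nil => intro x; simp [conjList, Interp.sem]
  | cons D L ih =>
      intro x
      simp only [conjList, Interp.sem, Set.mem_inter_iff, ih, List.mem_cons]
      constructor
      · rintro ⟨h1, h2⟩ E (rfl | hE)
        · exact h1
        · exact h2 _ hE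
      · intro h; exact ⟨h D (Or.inl rfl), fun E hE => h E (Or.inr hE)⟩

theorem cnames_conjList {σ : Set C} :
    ∀ L : List (ALCConcept C R), (∀ D ∈ L, D.cnames ⊆ σ) →
      (conjList L).cnames ⊆ σ := by
  intro L
  induction L with
  | nil => intro _; simp [conjList, ALCConcept.cnames]
  | cons D L ih =>
      intro h
      simp only [conjList, ALCConcept.cnames, Set.union_subset_iff]
      exact ⟨h D List.mem_cons_self, ih fun E hE => h E (List.mem_cons_of_mem _ hE)⟩

theorem rnames_conjList {σ : Set R} :
    ∀ L : List (ALCConcept C R), (∀ D ∈ L, D.rnames ⊆ σ) →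
      (conjList L).rnames ⊆ σ := by
  intro L
  induction L with
  | nil => intro _; simp [conjList, ALCConcept.rnames]
  | cons D L ih =>
      intro h
      simp only [conjList, ALCConcept.rnames, Set.union_subset_iff]
      exact ⟨h D List.mem_cons_self, ih fun E hE => h E (List.mem_cons_of_mem _ hE)⟩

variable {ι : Type} (U : Ultrafilter ι) {Δ : ι → Type} (I : ∀ i, Interp C R (Δ i))

/-- The "ultraproduct" (without quotient, as ALC has no equality) interpretation. -/
def prodInterp : Interp C R (∀ i, Δ i) where
  conc A := {x | ∀ᶠ i in U, x i ∈ (I i).conc A}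
  role r := {p | ∀ᶠ i in U, (p.1 i, p.2 i) ∈ (I i).role r}

/-- Łoś's theorem for ALC concepts. -/
theorem los [∀ i, Nonempty (Δ i)] (c : ALCConcept C R) :
    ∀ x, x ∈ (prodInterp U I).sem c ↔ ∀ᶠ i in (U : Filter ι), x i ∈ (I i).sem c := by
  induction c with
  | top => intro x; simp [Interp.sem]
  | atom A => intro x; exact Iff.rfl
  | neg c ih =>
      intro x
      have h : x ∈ (prodInterp U I).sem (.neg c) ↔ ¬ x ∈ (prodInterp U I).sem c := Iff.rfl
      rw [h, ih]
      exact Ultrafilter.eventually_not.symm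
  | inter c d ihc ihd =>
      intro x
      have h : x ∈ (prodInterp U I).sem (.inter c d) ↔
          x ∈ (prodInterp U I).sem c ∧ x ∈ (prodInterp U I).sem d := Iff.rfl
      rw [h, ihc, ihd, ← eventually_and]
      exact Iff.rfl
  | ex r c ih =>
      intro x
      constructor
      · rintro ⟨y, hr, hy⟩
        rw [ih] at hy
        have hr' : ∀ᶠ i in (U : Filter ι), (x i, y i) ∈ (I i).role r := hr
        filter_upwards [hr', hy] with i h1 h2
        exact ⟨y i, h1, h2⟩
      · intro h
        classical
        have hy : ∀ i, ∃ e : Δ i, x i ∈ (I i).sem (.ex r c) →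
            ((x i, e) ∈ (I i).role r ∧ e ∈ (I i).sem c) := by
          intro i
          by_cases hi : ∃ e, (x i, e) ∈ (I i).role r ∧ e ∈ (I i).sem c
          · exact ⟨hi.choose, fun _ => hi.choose_spec⟩
          · exact ⟨Classical.arbitrary _, fun hx => absurd hx hi⟩
        choose y hy using hy
        refine ⟨y, ?_, ?_⟩
        · show ∀ᶠ i in (U : Filter ι), _
          filter_upwards [h] with i hi
          exact (hy i hi).1
        · rw [ih]
          filter_upwards [h] with i hi
          exact (hy i hi).2

end Aux

/-- The index type: finite sets of "good" concepts. -/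
def GoodIdx {A : Type} (Good : A → Prop) : Type :=
  {S : Finset A // ∀ D ∈ S, Good D}

noncomputable instance {A : Type} (Good : A → Prop) : SemilatticeSup (GoodIdx Good) :=
  letI := Classical.decEq A
  Subtype.semilatticeSup (fun S T hS hT D hD => by
    rw [Finset.sup_eq_union, Finset.mem_union] at hD
    rcases hD with h | h
    exacts [hS D h, hT D h])

instance {A : Type} (Good : A → Prop) : Nonempty (GoodIdx Good) :=
  ⟨⟨∅, by simp⟩⟩

/-- compactness step: if no ALC-interpolant for `C₁ ⊑ C₂` under
`O₁ ∪ O₂` exists, there is a model `J` of `O₁ ∪ O₂` and an element `d` not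
satisfying `C₂` but satisfying every ALC(Σ)-concept entailed by `C₁`. -/
theorem compactness_step {C R : Type}
    (O₁ O₂ : Set (ALCConcept C R × ALCConcept C R)) (C₁ C₂ : ALCConcept C R)
    (hno : ¬ ∃ D : ALCConcept C R,
        D.cnames ⊆ (ontCnames O₁ ∪ C₁.cnames) ∩ (ontCnames O₂ ∪ C₂.cnames) ∧
        D.rnames ⊆ (ontRnames O₁ ∪ C₁.rnames) ∩ (ontRnames O₂ ∪ C₂.rnames) ∧
        (∀ (Δ : Type) (I : Interp C R Δ), I.models (O₁ ∪ O₂) → I.sem C₁ ⊆ I.sem D) ∧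
        (∀ (Δ : Type) (I : Interp C R Δ), I.models (O₁ ∪ O₂) → I.sem D ⊆ I.sem C₂)) :
    ∃ (Δ : Type) (J : Interp C R Δ) (d : Δ), J.models (O₁ ∪ O₂) ∧ d ∉ J.sem C₂ ∧
      ∀ D : ALCConcept C R,
        D.cnames ⊆ (ontCnames O₁ ∪ C₁.cnames) ∩ (ontCnames O₂ ∪ C₂.cnames) →
        D.rnames ⊆ (ontRnames O₁ ∪ C₁.rnames) ∩ (ontRnames O₂ ∪ C₂.rnames) →
        (∀ (Δ' : Type) (I : Interp C R Δ'), I.models (O₁ ∪ O₂) → I.sem C₁ ⊆ I.sem D) →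
        d ∈ J.sem D := by
  classical
  set σC := (ontCnames O₁ ∪ C₁.cnames) ∩ (ontCnames O₂ ∪ C₂.cnames) with hσC
  set σR := (ontRnames O₁ ∪ C₁.rnames) ∩ (ontRnames O₂ ∪ C₂.rnames) with hσR
  set Good : ALCConcept C R → Prop := fun D =>
    D.cnames ⊆ σC ∧ D.rnames ⊆ σR ∧
    ∀ (Δ : Type) (I : Interp C R Δ), I.models (O₁ ∪ O₂) → I.sem C₁ ⊆ I.sem D with hGood
  -- for each index, pick a model and a point
  have hpick : ∀ S : GoodIdx Good, ∃ (Δ : Type) (I : Interp C R Δ) (d : Δ),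
      I.models (O₁ ∪ O₂) ∧ d ∈ I.sem (conjList S.1.toList) ∧ d ∉ I.sem C₂ := by
    intro S
    set D₀ := conjList S.1.toList with hD₀
    have hc : D₀.cnames ⊆ σC :=
      cnames_conjList _ (fun D hD => (S.2 D (Finset.mem_toList.1 hD)).1)
    have hr : D₀.rnames ⊆ σR :=
      rnames_conjList _ (fun D hD => (S.2 D (Finset.mem_toList.1 hD)).2.1)
    have hent : ∀ (Δ : Type) (I : Interp C R Δ), I.models (O₁ ∪ O₂) →
        I.sem C₁ ⊆ I.sem D₀ := by
      intro Δ I hI x hx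
      rw [mem_sem_conjList]
      intro D hD
      exact (S.2 D (Finset.mem_toList.1 hD)).2.2 Δ I hI hx
    by_contra hcon
    push_neg at hcon
    apply hno
    refine ⟨D₀, hc, hr, hent, ?_⟩
    intro Δ I hI x hx
    exact hcon Δ I x hI hx
  choose Δ I d hmod hdin hdout using hpick
  haveI : ∀ S, Nonempty (Δ S) := fun S => ⟨d S⟩
  -- the ultrafilter
  let U : Ultrafilter (GoodIdx Good) := Ultrafilter.of atTop
  have hUD : ∀ D : ALCConcept C R, Good D →
      ∀ᶠ S in (U : Filter (GoodIdx Good)), D ∈ S.1 := by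
    intro D hD
    have h1 : ∀ᶠ S in (atTop : Filter (GoodIdx Good)), D ∈ S.1 := by
      refine Filter.eventually_atTop.2 ⟨⟨{D}, by simpa using hD⟩, ?_⟩
      intro T hT
      exact Finset.singleton_subset_iff.1 hT
    exact h1.filter_mono (Ultrafilter.of_le atTop)
  refine ⟨∀ S, Δ S, prodInterp U I, fun S => d S, ?_, ?_, ?_⟩
  · -- models
    intro p hp x hx
    rw [los] at hx ⊢
    filter_upwards [hx] with S hS
    exact hmod S p hp hS
  · -- not in C₂
    rw [los]
    intro h
    obtain ⟨S, hS⟩ := h.exists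
    exact hdout S hS
  · -- satisfies every entailed Σ-concept
    intro D hc hr hent
    rw [los]
    filter_upwards [hUD D ⟨hc, hr, hent⟩] with S hDS
    exact (mem_sem_conjList (I S) _ (d S)).1 (hdin S) D (Finset.mem_toList.2 hDS)
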